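/- arXiv:2212.04379 — 2 statements merged into one kernel-verified Lean document; each statement's English description precedes it below -/
import Mathlib

section
/- (Factorization for the symmetric A₂ quiver.) Let C = [[0,1],[1,0]] ∈ Mat_{2×2}(ℤ). Then in K[[x₁,x₂]]: P_C · Poch((1,0),0) · Poch((0,1),0) = Poch((1,1),0), i.e. P_C = (x₁;q²)_∞^{−1} (x₂;q²)_∞^{−1} (x₁x₂;q²)_∞. Consequently, the function Ω with Ω((1,0),0) = −1, Ω((0,1),0) = −1, Ω((1,1),0) = +1, and Ω(d,s) = 0 otherwise, is a DT-exponent function for C: the symmetric A₂ quiver has exactly three nonzero motivic DT invariants. -/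
noncomputable section

/-- The base field `K = ℚ(q)`. -/
abbrev K : Type := RatFunc ℚ

/-- The variable `q` of `K = ℚ(q)`. -/
def qq : K := RatFunc.X

/-- The finite q-Pochhammer symbol `(α; q²)_n = ∏_{k=0}^{n-1} (1 - α q^{2k})`. -/
def qPoch (α : K) (n : ℕ) : K := ∏ k ∈ Finset.range n, (1 - α * qq ^ (2 * k))

/-- The quadratic form `dᵀ C d` of an integer matrix on a dimension vector. -/
def quadForm {N : ℕ} (C : Matrix (Fin N) (Fin N) ℤ) (d : Fin N → ℕ) : ℤ :=
  ∑ i, ∑ j, C i j * (d i : ℤ) * (d j : ℤ)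

/-- The coefficient of `x^d` in the motivic generating series of the extended
symmetric quiver with adjacency matrix `C`: `(-q)^{dᵀCd} / ∏ᵢ (q²;q²)_{dᵢ}`. -/
def Pcoeff {N : ℕ} (C : Matrix (Fin N) (Fin N) ℤ) (d : Fin N → ℕ) : K :=
  (-qq) ^ quadForm C d / ∏ i, qPoch (qq ^ 2) (d i)

/-- The motivic generating series `P_C ∈ K[[x_1,…,x_N]]`. -/
def Pser {N : ℕ} (C : Matrix (Fin N) (Fin N) ℤ) : MvPowerSeries (Fin N) K :=
  fun d => Pcoeff C (fun i => d i)

open Classical in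
/-- Formal expansion of the infinite q-Pochhammer `(q^s x^d ; q²)_∞`:
its coefficient at `j • d` is `(-1)^j q^{j(j-1)+js} / (q²;q²)_j`, and all other
coefficients vanish. -/
def Poch {N : ℕ} (d : Fin N →₀ ℕ) (s : ℤ) : MvPowerSeries (Fin N) K :=
  fun e =>
    if h : ∃ j : ℕ, e = j • d then
      (-1 : K) ^ h.choose *
        qq ^ ((h.choose : ℤ) * ((h.choose : ℤ) - 1) + (h.choose : ℤ) * s) /
        qPoch (qq ^ 2) h.choose
    else 0

lemma qPoch_zero (α : K) : qPoch α 0 = 1 := by simp [qPoch]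

lemma constantCoeff_Poch {N : ℕ} {d : Fin N →₀ ℕ} (hd : d ≠ 0) (s : ℤ) :
    MvPowerSeries.constantCoeff (Poch d s) = 1 := by
  have h : ∃ j : ℕ, (0 : Fin N →₀ ℕ) = j • d := ⟨0, by simp⟩
  have hc : h.choose = 0 := by
    by_contra hc
    obtain ⟨x, hx⟩ := Finsupp.ne_iff.mp hd
    have hs := h.choose_spec
    have hx0 : (0 : Fin N →₀ ℕ) x = (h.choose • d) x := by rw [← hs]
    simp only [Finsupp.coe_zero, Pi.zero_apply, Finsupp.smul_apply, smul_eq_mul] at hx0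
    rcases Nat.mul_eq_zero.mp hx0.symm with h1 | h2
    · exact hc h1
    · simp at hx; exact hx h2
  have h0 : MvPowerSeries.constantCoeff (Poch d s) = Poch d s 0 := rfl
  rw [h0]
  unfold Poch
  rw [dif_pos h, hc]
  simp [qPoch_zero]

lemma isUnit_Poch {N : ℕ} {d : Fin N →₀ ℕ} (hd : d ≠ 0) (s : ℤ) :
    IsUnit (Poch d s) := by
  rw [MvPowerSeries.isUnit_iff_constantCoeff, constantCoeff_Poch hd s]
  exact isUnit_one

/-- `Poch d s` as an element of the unit group of `K[[x_1,…,x_N]]` (for `d ≠ 0`). -/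
def PochUnit {N : ℕ} (d : Fin N →₀ ℕ) (hd : d ≠ 0) (s : ℤ) : (MvPowerSeries (Fin N) K)ˣ :=
  (isUnit_Poch hd s).unit

open Classical in
/-- The product `∏_{0 < |d| ≤ n} ∏_s Poch(d,s)^{Ω(d,s)}`, taken in the unit group of
`K[[x_1,…,x_N]]` (integer powers allowed). -/
def DTProd {N : ℕ} (Ω : (Fin N →₀ ℕ) → ℤ → ℤ) (n : ℕ) : (MvPowerSeries (Fin N) K)ˣ :=
  ∏ᶠ (d : Fin N →₀ ℕ) (s : ℤ),
    if h : d ≠ 0 ∧ (d.sum fun _ c => c) ≤ n then PochUnit d h.1 s ^ Ω d s else 1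

/-- `Ω` is a DT-exponent function for `C`: for every `d ≠ 0` only finitely many `Ω d s`
are nonzero, and for every `n` the coefficients of `P_C` and of the finite product
`∏_{0<|d|≤n} ∏_{s} Poch(d,s)^{Ω(d,s)}` agree on all monomials of total degree `≤ n`.
The values `Ω d s` are the motivic Donaldson–Thomas invariants of `C`. -/
def IsDTExponent {N : ℕ} (C : Matrix (Fin N) (Fin N) ℤ) (Ω : (Fin N →₀ ℕ) → ℤ → ℤ) : Prop :=
  (∀ d : Fin N →₀ ℕ, d ≠ 0 → (Function.support (Ω d)).Finite) ∧
  ∀ n : ℕ, ∀ d : Fin N →₀ ℕ, (d.sum fun _ c => c) ≤ n →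
    MvPowerSeries.coeff d (Pser C) = MvPowerSeries.coeff d ↑(DTProd Ω n)

section Scalar

lemma qq_pow_ne_one {m : ℕ} (hm : m ≠ 0) : qq ^ m ≠ 1 := by
  intro h
  have h2 : (algebraMap (Polynomial ℚ) (RatFunc ℚ)) (Polynomial.X ^ m) =
      (algebraMap (Polynomial ℚ) (RatFunc ℚ)) 1 := by
    rw [map_pow, map_one, RatFunc.algebraMap_X]
    exact h
  have h3 : (Polynomial.X : Polynomial ℚ) ^ m = 1 := RatFunc.algebraMap_injective ℚ h2
  have := congrArg Polynomial.natDegree h3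
  simp [Polynomial.natDegree_X_pow] at this
  exact hm this

lemma one_sub_qq_pow_ne_zero {m : ℕ} (hm : m ≠ 0) : (1 : K) - qq ^ m ≠ 0 := by
  intro h
  exact qq_pow_ne_one hm (by linear_combination -h)

lemma qPoch_succ (α : K) (n : ℕ) :
    qPoch α (n + 1) = qPoch α n * (1 - α * qq ^ (2 * n)) := Finset.prod_range_succ _ n

lemma qPoch_succ' (α : K) (n : ℕ) :
    qPoch α (n + 1) = (1 - α) * qPoch (α * qq ^ 2) n := by
  rw [qPoch, Finset.prod_range_succ']
  simp only [mul_zero, pow_zero, mul_one]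
  rw [mul_comm]
  congr 1
  apply Finset.prod_congr rfl
  intro k _
  congr 1
  ring

lemma pq_succ (n : ℕ) :
    qPoch (qq ^ 2) (n + 1) = qPoch (qq ^ 2) n * (1 - qq ^ (2 * n + 2)) := by
  rw [qPoch_succ]
  congr 2
  ring

lemma pq_ne_zero (n : ℕ) : qPoch (qq ^ 2) n ≠ 0 := by
  induction n with
  | zero => simp [qPoch]
  | succ n ih =>
      rw [pq_succ]
      exact mul_ne_zero ih (one_sub_qq_pow_ne_zero (by omega))

/-- Gaussian binomial coefficient at `q²`. -/
def qbin : ℕ → ℕ → K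
  | _, 0 => 1
  | 0, _+1 => 0
  | n+1, k+1 => qbin n k + qq ^ (2 * (k + 1)) * qbin n (k + 1)

lemma qbin_zero (n : ℕ) : qbin n 0 = 1 := by cases n <;> rfl

lemma qbin_eq_zero : ∀ {n k : ℕ}, n < k → qbin n k = 0
  | 0, _+1, _ => rfl
  | n+1, k+1, h => by
      rw [qbin, qbin_eq_zero (by omega), qbin_eq_zero (by omega)]
      ring

lemma qbin_mul : ∀ n i : ℕ, i ≤ n →
    qbin n i * (qPoch (qq ^ 2) i * qPoch (qq ^ 2) (n - i)) = qPoch (qq ^ 2) n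
  | 0, 0, _ => by simp [qbin_zero, qPoch]
  | n+1, 0, _ => by simp [qbin_zero, qPoch]
  | n+1, k+1, h => by
      rcases Nat.lt_or_ge k n with hk | hk
      · -- k+1 ≤ n
        have h1 := qbin_mul n k (by omega)
        have h2 := qbin_mul n (k+1) (by omega)
        rw [qbin]
        have e1 : n + 1 - (k + 1) = n - k := by omega
        have e2 : n - k = (n - (k+1)) + 1 := by omega
        rw [e1, pq_succ n, add_mul]
        calc qbin n k * (qPoch (qq ^ 2) (k + 1) * qPoch (qq ^ 2) (n - k)) +
              qq ^ (2 * (k + 1)) * qbin n (k + 1) *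
                (qPoch (qq ^ 2) (k + 1) * qPoch (qq ^ 2) (n - k))
            = (1 - qq ^ (2 * k + 2)) * (qbin n k * (qPoch (qq ^ 2) k * qPoch (qq ^ 2) (n - k)))
              + qq ^ (2 * (k + 1)) * (1 - qq ^ (2 * (n - (k+1)) + 2)) *
                (qbin n (k+1) * (qPoch (qq ^ 2) (k+1) * qPoch (qq ^ 2) (n - (k+1)))) := by
              rw [pq_succ k]
              nth_rewrite 2 [e2]
              rw [pq_succ (n - (k+1))]
              ring
          _ = qPoch (qq ^ 2) n * (1 - qq ^ (2 * n + 2)) := by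
              rw [h1, h2]
              have e4 : qq ^ (2 * (k + 1)) * qq ^ (2 * (n - (k + 1)) + 2) = qq ^ (2 * n + 2) := by
                rw [← pow_add]; congr 1; omega
              linear_combination (-(qPoch (qq^2) n)) * e4
      · -- k ≥ n, so k = n (since k+1 ≤ n+1)
        have hkn : k = n := by omega
        subst hkn
        have h1 := qbin_mul k k le_rfl
        have h0 : qPoch (qq ^ 2) 0 = 1 := by simp [qPoch]
        rw [Nat.sub_self, h0, mul_one] at h1
        rw [qbin, qbin_eq_zero (Nat.lt_succ_self k), Nat.sub_self, pq_succ k, h0]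
        linear_combination (1 - qq ^ (2*k+2)) * h1

end Scalar
section Gauss

lemma gauss (n : ℕ) : ∀ t : K,
    ∑ i ∈ Finset.range (n + 1), (-1:K)^i * qq^(i*(i-1)) * qbin n i * t^i = qPoch t n := by
  induction n with
  | zero => intro t; simp [qbin_zero, qPoch]
  | succ n ih =>
    intro t
    have hS := ih (t * qq ^ 2)
    rw [qPoch_succ', ← hS]
    rw [Finset.sum_range_succ']
    have hterm : ∀ i ∈ Finset.range (n+1),
        (-1:K)^(i+1) * qq^((i+1)*((i+1)-1)) * qbin (n+1) (i+1) * t^(i+1)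
        = (-(t * ((-1:K)^i * qq^(i*(i-1)) * qbin n i * (t*qq^2)^i)))
          + (-1:K)^(i+1) * qq^((i+1)*((i+1)-1)) * (qq^(2*(i+1)) * qbin n (i+1)) * t^(i+1) := by
      intro i _
      rw [show qbin (n+1) (i+1) = qbin n i + qq ^ (2 * (i + 1)) * qbin n (i + 1) from rfl]
      have he : i*(i-1) + 2*i = (i+1)*((i+1)-1) := by
        cases i with
        | zero => rfl
        | succ m => simp only [Nat.succ_sub_one]; ring
      have hq : (qq:K)^((i+1)*((i+1)-1)) = qq^(i*(i-1)) * qq^(2*i) := by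
        rw [← pow_add, he]
      have hmp : ((t*qq^2):K)^i = t^i * qq^(2*i) := by
        rw [mul_pow, ← pow_mul]
      rw [hq, hmp]
      ring
    rw [Finset.sum_congr rfl hterm, Finset.sum_add_distrib]
    have sumA : ∑ i ∈ Finset.range (n+1),
        (-(t * ((-1:K)^i * qq^(i*(i-1)) * qbin n i * (t*qq^2)^i)))
        = -(t * ∑ i ∈ Finset.range (n+1), (-1:K)^i * qq^(i*(i-1)) * qbin n i * (t*qq^2)^i) := by
      rw [Finset.mul_sum, ← Finset.sum_neg_distrib]
    have hB : ∀ i ∈ Finset.range n,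
        (-1:K)^(i+1) * qq^((i+1)*((i+1)-1)) * (qq^(2*(i+1)) * qbin n (i+1)) * t^(i+1)
        = (-1:K)^(i+1) * qq^((i+1)*((i+1)-1)) * qbin n (i+1) * (t*qq^2)^(i+1) := by
      intro i _
      have hmp : ((t*qq^2):K)^(i+1) = t^(i+1) * qq^(2*(i+1)) := by
        rw [mul_pow, ← pow_mul]
      rw [hmp]; ring
    have sumB : ∑ i ∈ Finset.range (n+1),
        (-1:K)^(i+1) * qq^((i+1)*((i+1)-1)) * (qq^(2*(i+1)) * qbin n (i+1)) * t^(i+1)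
        = (∑ i ∈ Finset.range (n+1), (-1:K)^i * qq^(i*(i-1)) * qbin n i * (t*qq^2)^i) - 1 := by
      rw [Finset.sum_range_succ, qbin_eq_zero (Nat.lt_succ_self n)]
      rw [Finset.sum_congr rfl hB]
      rw [Finset.sum_range_succ' (fun i => (-1:K)^i * qq^(i*(i-1)) * qbin n i * (t*qq^2)^i) n]
      simp [qbin_zero]
    rw [sumA, sumB]
    simp only [pow_zero, qbin_zero, mul_one, one_mul]
    ring

end Gauss
section Eval

lemma qq_pow_ne_zero (m : ℕ) : (qq:K) ^ m ≠ 0 := pow_ne_zero m RatFunc.X_ne_zero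

lemma qPoch_inv_eq_zero {a m : ℕ} (h : m < a) : qPoch ((qq ^ (2*m))⁻¹) a = 0 := by
  apply Finset.prod_eq_zero (Finset.mem_range.mpr h)
  rw [inv_mul_cancel₀ (qq_pow_ne_zero (2*m)), sub_self]

lemma qPoch_one_eq_zero {n : ℕ} (h : n ≠ 0) : qPoch (1:K) n = 0 := by
  apply Finset.prod_eq_zero (Finset.mem_range.mpr (Nat.pos_of_ne_zero h))
  simp

lemma L2' (m : ℕ) : ∀ a, a ≤ m →
    qPoch ((qq ^ (2*m))⁻¹) a * qq ^ (2*(a*m)) =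
      (-1:K)^a * qq^(a*(a-1)) * ∏ k ∈ Finset.range a, (1 - qq^(2*(m-k))) := by
  intro a
  induction a with
  | zero => intro _; simp [qPoch]
  | succ a ih =>
    intro h
    have ha : a ≤ m := by omega
    rw [qPoch_succ, Finset.prod_range_succ]
    have h1 : (qq:K) ^ (2*((a+1)*m)) = qq ^ (2*(a*m)) * qq^(2*m) := by
      rw [← pow_add]; congr 1; ring
    have e : (qq:K)^(2*a) * qq^(2*(m-a)) = qq^(2*m) := by
      rw [← pow_add]; congr 1; omega
    have e2 : ((qq:K)^(2*m))⁻¹ * qq^(2*m) = 1 := inv_mul_cancel₀ (qq_pow_ne_zero _)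
    have h2 : (1 - ((qq:K) ^ (2*m))⁻¹ * qq^(2*a)) * qq^(2*m)
        = -(qq^(2*a) * (1 - qq^(2*(m-a)))) := by
      linear_combination -e - qq^(2*a) * e2
    have he : a*(a-1) + 2*a = (a+1)*((a+1)-1) := by
      cases a with
      | zero => rfl
      | succ k => simp only [Nat.succ_sub_one]; ring
    have hq : (qq:K)^((a+1)*((a+1)-1)) = qq^(a*(a-1)) * qq^(2*a) := by
      rw [← pow_add, he]
    calc qPoch ((qq ^ (2*m))⁻¹) a * (1 - (qq ^ (2*m))⁻¹ * qq^(2*a)) * qq^(2*((a+1)*m))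
        = (qPoch ((qq ^ (2*m))⁻¹) a * qq ^ (2*(a*m))) *
            ((1 - (qq ^ (2*m))⁻¹ * qq^(2*a)) * qq^(2*m)) := by rw [h1]; ring
      _ = ((-1:K)^a * qq^(a*(a-1)) * ∏ k ∈ Finset.range a, (1 - qq^(2*(m-k)))) *
            (-(qq^(2*a) * (1 - qq^(2*(m-a))))) := by rw [ih ha, h2]
      _ = (-1:K)^(a+1) * qq^((a+1)*((a+1)-1)) *
            ((∏ k ∈ Finset.range a, (1 - qq^(2*(m-k)))) * (1 - qq^(2*(m-a)))) := by
          rw [hq]; ring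

lemma L3 (m : ℕ) : ∀ a, a ≤ m →
    qPoch (qq^2) m = qPoch (qq^2) (m-a) * ∏ k ∈ Finset.range a, (1 - qq^(2*(m-k))) := by
  intro a
  induction a with
  | zero => intro _; simp
  | succ a ih =>
    intro h
    have ha : a ≤ m := by omega
    have h4 : qPoch (qq^2) (m-a) = qPoch (qq^2) (m-(a+1)) * (1 - qq^(2*(m-a))) := by
      have hma : m - a = (m - (a+1)) + 1 := by omega
      rw [hma, pq_succ]
      congr 2
    rw [ih ha, h4, Finset.prod_range_succ]
    ring

lemma innerSumT (a m : ℕ) :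
    ∑ i ∈ Finset.range (a+1),
      qq^(2*((a-i)*m)) / qPoch (qq^2) (a-i) * ((-1:K)^i * qq^(i*(i-1)) / qPoch (qq^2) i)
    = qq^(2*(a*m)) * qPoch ((qq^(2*m))⁻¹) a / qPoch (qq^2) a := by
  have hterm : ∀ i ∈ Finset.range (a+1),
      qq^(2*((a-i)*m)) / qPoch (qq^2) (a-i) * ((-1:K)^i * qq^(i*(i-1)) / qPoch (qq^2) i)
      = (qq^(2*(a*m)) / qPoch (qq^2) a) *
          ((-1:K)^i * qq^(i*(i-1)) * qbin a i * ((qq^(2*m))⁻¹)^i) := by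
    intro i hi
    have hia : i ≤ a := by simpa using Nat.lt_succ_iff.mp (Finset.mem_range.mp hi)
    obtain ⟨c, rfl⟩ : ∃ c, a = i + c := ⟨a - i, by omega⟩
    have hc : i + c - i = c := by omega
    rw [hc]
    have hb := qbin_mul (i+c) i (by omega)
    rw [hc] at hb
    have hq : (qq:K)^(2*((i+c)*m)) = qq^(2*(c*m)) * (qq^(2*m))^i := by
      rw [← pow_mul, ← pow_add]; congr 1; ring
    have hinv : ((qq:K)^(2*m))⁻¹^i * (qq^(2*m))^i = 1 := by
      rw [← mul_pow, inv_mul_cancel₀ (qq_pow_ne_zero _), one_pow]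
    rw [hq, inv_pow]
    have n1 := pq_ne_zero i
    have n2 := pq_ne_zero c
    have n3 := pq_ne_zero (i+c)
    have hy : ((qq:K)^(2*m))^i ≠ 0 := pow_ne_zero _ (qq_pow_ne_zero (2*m))
    generalize ((qq:K)^(2*m))^i = y at hy ⊢
    field_simp
    linear_combination (-(qq^(i*(i-1)) * qq^(2*(c*m)))) * hb
  rw [Finset.sum_congr rfl hterm, ← Finset.mul_sum, gauss]
  ring

lemma Tval (a m : ℕ) :
    ∑ i ∈ Finset.range (a+1),
      qq^(2*((a-i)*m)) / qPoch (qq^2) (a-i) * ((-1:K)^i * qq^(i*(i-1)) / qPoch (qq^2) i)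
    = if a ≤ m then
        (-1:K)^a * qq^(a*(a-1)) * qPoch (qq^2) m / (qPoch (qq^2) a * qPoch (qq^2) (m-a))
      else 0 := by
  rw [innerSumT]
  split_ifs with h
  · have l2 := L2' m a h
    have l3 := L3 m a h
    rw [div_eq_div_iff (pq_ne_zero a) (mul_ne_zero (pq_ne_zero a) (pq_ne_zero (m-a)))]
    calc qq^(2*(a*m)) * qPoch ((qq^(2*m))⁻¹) a * (qPoch (qq^2) a * qPoch (qq^2) (m-a))
        = qPoch (qq^2) a * (qPoch ((qq^(2*m))⁻¹) a * qq^(2*(a*m)) * qPoch (qq^2) (m-a)) := by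
          ring
      _ = qPoch (qq^2) a * ((-1:K)^a * qq^(a*(a-1)) *
            (qPoch (qq^2) (m-a) * ∏ k ∈ Finset.range a, (1 - qq^(2*(m-k))))) := by
          rw [l2]; ring
      _ = (-1:K)^a * qq^(a*(a-1)) * qPoch (qq^2) m * qPoch (qq^2) a := by
          rw [← l3]; ring
  · rw [qPoch_inv_eq_zero (by omega)]
    simp

lemma euler0 (n : ℕ) :
    ∑ j ∈ Finset.range (n+1),
      (-1:K)^j * qq^(j*(j-1)) / (qPoch (qq^2) j * qPoch (qq^2) (n-j))
    = if n = 0 then 1 else 0 := by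
  have hterm : ∀ j ∈ Finset.range (n+1),
      (-1:K)^j * qq^(j*(j-1)) / (qPoch (qq^2) j * qPoch (qq^2) (n-j))
      = (1 / qPoch (qq^2) n) * ((-1:K)^j * qq^(j*(j-1)) * qbin n j * (1:K)^j) := by
    intro j hj
    have hb := qbin_mul n j (by simpa using Nat.lt_succ_iff.mp (Finset.mem_range.mp hj))
    rw [one_pow, mul_one]
    have n1 := pq_ne_zero j
    have n2 := pq_ne_zero (n-j)
    have n3 := pq_ne_zero n
    field_simp
    linear_combination -(qq^(j*(j-1))) * hb
  rw [Finset.sum_congr rfl hterm, ← Finset.mul_sum, gauss]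
  cases n with
  | zero => simp [qPoch]
  | succ n =>
    rw [qPoch_one_eq_zero (Nat.succ_ne_zero n)]
    simp

theorem keyIdentity (a b : ℕ) :
    ∑ j ∈ Finset.range (b+1), ∑ i ∈ Finset.range (a+1),
      qq^(2*((a-i)*(b-j))) / (qPoch (qq^2) (a-i) * qPoch (qq^2) (b-j)) *
        ((-1:K)^i * qq^(i*(i-1)) / qPoch (qq^2) i) *
        ((-1:K)^j * qq^(j*(j-1)) / qPoch (qq^2) j)
    = if a = b then (-1:K)^a * qq^(a*(a-1)) / qPoch (qq^2) a else 0 := by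
  have hj : ∀ j ∈ Finset.range (b+1),
      (∑ i ∈ Finset.range (a+1),
        qq^(2*((a-i)*(b-j))) / (qPoch (qq^2) (a-i) * qPoch (qq^2) (b-j)) *
          ((-1:K)^i * qq^(i*(i-1)) / qPoch (qq^2) i) *
          ((-1:K)^j * qq^(j*(j-1)) / qPoch (qq^2) j))
      = (if a ≤ b - j then
          (-1:K)^a * qq^(a*(a-1)) * qPoch (qq^2) (b-j) /
            (qPoch (qq^2) a * qPoch (qq^2) ((b-j)-a))
         else 0) *
        ((-1:K)^j * qq^(j*(j-1)) / (qPoch (qq^2) j * qPoch (qq^2) (b-j))) := by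
    intro j _
    rw [← Tval a (b-j), Finset.sum_mul]
    apply Finset.sum_congr rfl
    intro i _
    ring
  rw [Finset.sum_congr rfl hj]
  by_cases hab : a ≤ b
  · -- restrict to j ≤ b - a
    rw [← Finset.sum_subset (Finset.range_subset_range.mpr (by omega : b - a + 1 ≤ b + 1))
        (fun j hj1 hj2 => by
          have : ¬ (a ≤ b - j) := by
            simp only [Finset.mem_range] at hj1 hj2
            omega
          rw [if_neg this, zero_mul])]
    have hterm2 : ∀ j ∈ Finset.range (b - a + 1),
        (if a ≤ b - j then
          (-1:K)^a * qq^(a*(a-1)) * qPoch (qq^2) (b-j) /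
            (qPoch (qq^2) a * qPoch (qq^2) ((b-j)-a))
         else 0) *
        ((-1:K)^j * qq^(j*(j-1)) / (qPoch (qq^2) j * qPoch (qq^2) (b-j)))
        = ((-1:K)^a * qq^(a*(a-1)) / qPoch (qq^2) a) *
            ((-1:K)^j * qq^(j*(j-1)) / (qPoch (qq^2) j * qPoch (qq^2) ((b-a)-j))) := by
      intro j hjm
      have hjba : j ≤ b - a := by simpa using Nat.lt_succ_iff.mp (Finset.mem_range.mp hjm)
      have h1 : a ≤ b - j := by omega
      have h2 : (b - j) - a = (b - a) - j := by omega
      rw [if_pos h1, h2]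
      have h3 := pq_ne_zero (b - j)
      have h4 := pq_ne_zero a
      have h5 := pq_ne_zero j
      have h6 := pq_ne_zero ((b-a)-j)
      field_simp
    rw [Finset.sum_congr rfl hterm2, ← Finset.mul_sum, euler0 (b-a)]
    by_cases heq : a = b
    · simp [heq]
    · have : b - a ≠ 0 := by omega
      simp [this, heq]
  · -- b < a : every summand vanishes
    have : ∀ j ∈ Finset.range (b+1),
        (if a ≤ b - j then
          (-1:K)^a * qq^(a*(a-1)) * qPoch (qq^2) (b-j) /
            (qPoch (qq^2) a * qPoch (qq^2) ((b-j)-a))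
         else 0) *
        ((-1:K)^j * qq^(j*(j-1)) / (qPoch (qq^2) j * qPoch (qq^2) (b-j))) = 0 := by
      intro j _
      have : ¬ (a ≤ b - j) := by omega
      rw [if_neg this, zero_mul]
    rw [Finset.sum_congr rfl this, Finset.sum_const, smul_zero]
    rw [if_neg (by omega)]

end Eval
section Series

lemma smul_right_inj' {N : ℕ} {d : Fin N →₀ ℕ} (hd : d ≠ 0) {j j' : ℕ}
    (h : j • d = j' • d) : j = j' := by
  obtain ⟨x, hx⟩ := Finsupp.ne_iff.mp hd
  have hx0 : d x ≠ 0 := by simpa using hx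
  have h2 := DFunLike.congr_fun h x
  simp only [Finsupp.smul_apply, smul_eq_mul] at h2
  exact Nat.eq_of_mul_eq_mul_right (Nat.pos_of_ne_zero hx0) h2

lemma single_one_ne_zero {N : ℕ} (i : Fin N) : (Finsupp.single i 1 : Fin N →₀ ℕ) ≠ 0 := by
  intro h
  have := DFunLike.congr_fun h i
  simp at this

lemma Poch_apply_smul {N : ℕ} {d : Fin N →₀ ℕ} (hd : d ≠ 0) (s : ℤ) (j : ℕ) :
    Poch d s (j • d) =
      (-1:K)^j * qq ^ ((j:ℤ)*((j:ℤ)-1) + (j:ℤ)*s) / qPoch (qq^2) j := by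
  have h : ∃ j' : ℕ, j • d = j' • d := ⟨j, rfl⟩
  have hc : h.choose = j := (smul_right_inj' hd h.choose_spec).symm
  simp only [Poch]
  rw [dif_pos h, hc]

lemma Poch_apply_ne {N : ℕ} (d : Fin N →₀ ℕ) (s : ℤ) {e : Fin N →₀ ℕ}
    (h : ¬ ∃ j : ℕ, e = j • d) : Poch d s e = 0 := by
  simp only [Poch]
  rw [dif_neg h]

lemma zpow_exp0 (j : ℕ) :
    (qq:K) ^ ((j:ℤ)*((j:ℤ)-1) + (j:ℤ)*(0:ℤ)) = qq ^ (j*(j-1)) := by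
  have h : ((j:ℤ)*((j:ℤ)-1) + (j:ℤ)*(0:ℤ)) = ((j*(j-1) : ℕ) : ℤ) := by
    cases j with
    | zero => simp
    | succ m =>
        push_cast [Nat.succ_sub_one]
        ring
  rw [h, zpow_natCast]

lemma coeff_mul_Poch_single (f : MvPowerSeries (Fin 2) K) (i : Fin 2) (s : ℤ) (e : Fin 2 →₀ ℕ) :
    MvPowerSeries.coeff e (f * Poch (Finsupp.single i 1) s) =
      ∑ j ∈ Finset.range (e i + 1),
        MvPowerSeries.coeff (e - Finsupp.single i j) f *
          ((-1:K)^j * qq ^ ((j:ℤ)*((j:ℤ)-1) + (j:ℤ)*s) / qPoch (qq^2) j) := by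
  classical
  rw [MvPowerSeries.coeff_mul]
  have hsub : (Finset.range (e i + 1)).image
      (fun j => (e - Finsupp.single i j, Finsupp.single i j)) ⊆ Finset.HasAntidiagonal.antidiagonal e := by
    intro p hp
    simp only [Finset.mem_image, Finset.mem_range] at hp
    obtain ⟨j, hj, rfl⟩ := hp
    rw [Finset.HasAntidiagonal.mem_antidiagonal]
    exact tsub_add_cancel_of_le (Finsupp.single_le_iff.mpr (by omega))
  have hzero : ∀ p ∈ Finset.HasAntidiagonal.antidiagonal e,
      p ∉ (Finset.range (e i + 1)).image
        (fun j => (e - Finsupp.single i j, Finsupp.single i j)) →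
      MvPowerSeries.coeff p.1 f * MvPowerSeries.coeff p.2 (Poch (Finsupp.single i 1) s) = 0 := by
    rintro ⟨p1, p2⟩ hp hnp
    rw [Finset.HasAntidiagonal.mem_antidiagonal] at hp
    simp only at hp ⊢
    have hz : Poch (Finsupp.single i 1) s p2 = 0 := by
      apply Poch_apply_ne
      rintro ⟨j, hj⟩
      rw [Finsupp.smul_single, smul_eq_mul, mul_one] at hj
      apply hnp
      simp only [Finset.mem_image, Finset.mem_range]
      have hp1 : p1 = e - Finsupp.single i j := by
        rw [hj] at hp
        exact eq_tsub_of_add_eq hp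
      have hji : j ≤ e i := by
        have h2 := DFunLike.congr_fun hp i
        rw [hj] at h2
        simp only [Finsupp.add_apply, Finsupp.single_eq_same] at h2
        omega
      exact ⟨j, by omega, by rw [hp1, hj]⟩
    rw [MvPowerSeries.coeff_apply (Poch (Finsupp.single i 1) s) p2, hz, mul_zero]
  rw [← Finset.sum_subset hsub hzero]
  rw [Finset.sum_image (by
    intro x _ y _ hxy
    have h2 := congrArg Prod.snd hxy
    simp only at h2
    exact Finsupp.single_injective i h2)]
  apply Finset.sum_congr rfl
  intro j _
  simp only
  congr 1
  rw [MvPowerSeries.coeff_apply]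
  rw [show (Finsupp.single i j : Fin 2 →₀ ℕ) = j • Finsupp.single i 1 by
    rw [Finsupp.smul_single, smul_eq_mul, mul_one]]
  exact Poch_apply_smul (single_one_ne_zero i) s j

lemma Pser_coeff_eval (u : Fin 2 →₀ ℕ) :
    MvPowerSeries.coeff u (Pser !![(0:ℤ),1;1,0]) =
      qq ^ (2*(u 0 * u 1)) / (qPoch (qq^2) (u 0) * qPoch (qq^2) (u 1)) := by
  have hc : MvPowerSeries.coeff u (Pser !![(0:ℤ),1;1,0])
      = Pcoeff !![(0:ℤ),1;1,0] (fun k => u k) := rfl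
  rw [hc]
  unfold Pcoeff
  have hQ : quadForm !![(0:ℤ),1;1,0] (fun k => u k) = ((2*(u 0 * u 1) : ℕ) : ℤ) := by
    unfold quadForm
    rw [Fin.sum_univ_two, Fin.sum_univ_two, Fin.sum_univ_two]
    rw [show (!![(0:ℤ),1;1,0]) 0 0 = 0 from rfl, show (!![(0:ℤ),1;1,0]) 0 1 = 1 from rfl,
      show (!![(0:ℤ),1;1,0]) 1 0 = 1 from rfl, show (!![(0:ℤ),1;1,0]) 1 1 = 0 from rfl]
    push_cast
    ring
  rw [hQ, zpow_natCast, Even.neg_pow ⟨u 0 * u 1, by ring⟩]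
  rw [Fin.prod_univ_two]

theorem part1 :
    Pser !![(0 : ℤ), 1; 1, 0] * Poch (Finsupp.single (0 : Fin 2) 1) 0 *
        Poch (Finsupp.single (1 : Fin 2) 1) 0
      = Poch (Finsupp.single (0 : Fin 2) 1 + Finsupp.single (1 : Fin 2) 1) 0 := by
  apply MvPowerSeries.ext
  intro e
  rw [coeff_mul_Poch_single]
  have hstep : ∀ j ∈ Finset.range (e 1 + 1),
      MvPowerSeries.coeff (e - Finsupp.single (1 : Fin 2) j)
          (Pser !![(0:ℤ),1;1,0] * Poch (Finsupp.single (0:Fin 2) 1) 0) *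
        ((-1:K)^j * qq ^ ((j:ℤ)*((j:ℤ)-1) + (j:ℤ)*(0:ℤ)) / qPoch (qq^2) j)
      = ∑ i ∈ Finset.range (e 0 + 1),
          qq^(2*((e 0 - i)*(e 1 - j))) /
              (qPoch (qq^2) (e 0 - i) * qPoch (qq^2) (e 1 - j)) *
            ((-1:K)^i * qq^(i*(i-1)) / qPoch (qq^2) i) *
            ((-1:K)^j * qq^(j*(j-1)) / qPoch (qq^2) j) := by
    intro j hj
    rw [coeff_mul_Poch_single]
    have h0 : (e - Finsupp.single (1 : Fin 2) j) 0 = e 0 := by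
      simp [Finsupp.tsub_apply, Finsupp.single_apply]
    rw [h0, Finset.sum_mul]
    apply Finset.sum_congr rfl
    intro i _
    rw [Pser_coeff_eval]
    have h1 : (e - Finsupp.single (1 : Fin 2) j - Finsupp.single (0 : Fin 2) i) 0 = e 0 - i := by
      simp [Finsupp.tsub_apply, Finsupp.single_apply]
    have h2 : (e - Finsupp.single (1 : Fin 2) j - Finsupp.single (0 : Fin 2) i) 1 = e 1 - j := by
      simp [Finsupp.tsub_apply, Finsupp.single_apply]
    rw [h1, h2, zpow_exp0, zpow_exp0]
  rw [Finset.sum_congr rfl hstep, keyIdentity (e 0) (e 1)]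
  have hD : (Finsupp.single (0:Fin 2) 1 + Finsupp.single (1:Fin 2) 1) ≠ 0 := by
    intro h
    have := DFunLike.congr_fun h 0
    simp [Finsupp.single_apply] at this
  by_cases hab : e 0 = e 1
  · rw [if_pos hab]
    have he : e = (e 0) • (Finsupp.single (0:Fin 2) 1 + Finsupp.single (1:Fin 2) 1) := by
      ext x
      fin_cases x <;>
        simp [Finsupp.smul_apply, Finsupp.single_apply, ← hab]
    conv_rhs => rw [he]
    rw [MvPowerSeries.coeff_apply, Poch_apply_smul hD 0 (e 0), zpow_exp0]
  · rw [if_neg hab]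
    rw [MvPowerSeries.coeff_apply, Poch_apply_ne]
    rintro ⟨j, hj⟩
    apply hab
    have h0 := DFunLike.congr_fun hj 0
    have h1 := DFunLike.congr_fun hj 1
    simp [Finsupp.smul_apply, Finsupp.single_apply] at h0 h1
    omega

end Series
section DT

def Om : (Fin 2 →₀ ℕ) → ℤ → ℤ := fun d s =>
  if d = Finsupp.single (0 : Fin 2) 1 ∧ s = 0 then -1
  else if d = Finsupp.single (1 : Fin 2) 1 ∧ s = 0 then -1
  else if d = Finsupp.single (0 : Fin 2) 1 + Finsupp.single (1 : Fin 2) 1 ∧ s = 0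
    then 1 else 0

def U1 : (MvPowerSeries (Fin 2) K)ˣ :=
  PochUnit (Finsupp.single (0:Fin 2) 1) (single_one_ne_zero 0) 0
def U2 : (MvPowerSeries (Fin 2) K)ˣ :=
  PochUnit (Finsupp.single (1:Fin 2) 1) (single_one_ne_zero 1) 0

lemma sumval (d : Fin 2 →₀ ℕ) : (d.sum fun _ c => c) = d 0 + d 1 := by
  rw [Finsupp.sum_fintype _ _ (fun _ => rfl), Fin.sum_univ_two]

lemma e12_ne_zero : (Finsupp.single (0:Fin 2) 1 + Finsupp.single (1:Fin 2) 1) ≠ 0 := by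
  intro h
  have := DFunLike.congr_fun h 0
  simp [Finsupp.single_apply] at this

lemma e1_ne_e2 : (Finsupp.single (0:Fin 2) 1 : Fin 2 →₀ ℕ) ≠ Finsupp.single (1:Fin 2) 1 := by
  intro h
  have := DFunLike.congr_fun h 0
  simp [Finsupp.single_apply] at this

lemma e1_ne_e12 : (Finsupp.single (0:Fin 2) 1 : Fin 2 →₀ ℕ) ≠
    Finsupp.single (0:Fin 2) 1 + Finsupp.single (1:Fin 2) 1 := by
  intro h
  have := DFunLike.congr_fun h 1
  simp [Finsupp.single_apply] at this

lemma e2_ne_e12 : (Finsupp.single (1:Fin 2) 1 : Fin 2 →₀ ℕ) ≠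
    Finsupp.single (0:Fin 2) 1 + Finsupp.single (1:Fin 2) 1 := by
  intro h
  have := DFunLike.congr_fun h 0
  simp [Finsupp.single_apply] at this

lemma Om_eq_zero_of_ne {d : Fin 2 →₀ ℕ} {s : ℤ}
    (h1 : d ≠ Finsupp.single (0:Fin 2) 1) (h2 : d ≠ Finsupp.single (1:Fin 2) 1)
    (h3 : d ≠ Finsupp.single (0:Fin 2) 1 + Finsupp.single (1:Fin 2) 1) : Om d s = 0 := by
  unfold Om
  rw [if_neg (fun h => h1 h.1), if_neg (fun h => h2 h.1), if_neg (fun h => h3 h.1)]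

lemma Om_eq_zero_of_s {d : Fin 2 →₀ ℕ} {s : ℤ} (hs : s ≠ 0) : Om d s = 0 := by
  unfold Om
  rw [if_neg (fun h => hs h.2), if_neg (fun h => hs h.2), if_neg (fun h => hs h.2)]

lemma DTProd_eval (n : ℕ) :
    DTProd Om n =
      (if 1 ≤ n then U1⁻¹ else 1) *
      ((if 1 ≤ n then U2⁻¹ else 1) *
       (if 2 ≤ n then
          PochUnit (Finsupp.single (0:Fin 2) 1 + Finsupp.single (1:Fin 2) 1) e12_ne_zero 0
        else 1)) := by
  have hU12 : ∀ h, PochUnit (Finsupp.single (0:Fin 2) 1 + Finsupp.single (1:Fin 2) 1) h 0 =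
      PochUnit (Finsupp.single (0:Fin 2) 1 + Finsupp.single (1:Fin 2) 1) e12_ne_zero 0 :=
    fun _ => rfl
  classical
  unfold DTProd
  have hsupp : (Function.mulSupport fun d : Fin 2 →₀ ℕ => ∏ᶠ s : ℤ,
      if h : d ≠ 0 ∧ (d.sum fun _ c => c) ≤ n then PochUnit d h.1 s ^ Om d s else 1)
      ⊆ ↑({Finsupp.single (0:Fin 2) 1, Finsupp.single (1:Fin 2) 1,
          Finsupp.single (0:Fin 2) 1 + Finsupp.single (1:Fin 2) 1} : Finset (Fin 2 →₀ ℕ)) := by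
    intro d hd
    by_contra hmem
    simp only [Finset.coe_insert, Set.mem_insert_iff, Finset.coe_singleton,
      Set.mem_singleton_iff] at hmem
    push_neg at hmem
    obtain ⟨h1, h2, h3⟩ := hmem
    apply Function.mem_mulSupport.mp hd
    have hone : ∀ s : ℤ,
        (if h : d ≠ 0 ∧ (d.sum fun _ c => c) ≤ n then PochUnit d h.1 s ^ Om d s else 1) = 1 := by
      intro s
      split_ifs with h
      · rw [Om_eq_zero_of_ne h1 h2 h3, zpow_zero]
      · rfl
    rw [finprod_congr hone, finprod_one]
  rw [finprod_eq_prod_of_mulSupport_subset _ hsupp]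
  rw [Finset.prod_insert (by simp [e1_ne_e2, e1_ne_e12]),
    Finset.prod_insert (by simp [e2_ne_e12]), Finset.prod_singleton]
  have hg1 : (∏ᶠ s : ℤ, if h : (Finsupp.single (0:Fin 2) 1 : Fin 2 →₀ ℕ) ≠ 0 ∧
        ((Finsupp.single (0:Fin 2) 1 : Fin 2 →₀ ℕ).sum fun _ c => c) ≤ n then
        PochUnit (Finsupp.single (0:Fin 2) 1) h.1 s ^ Om (Finsupp.single (0:Fin 2) 1) s else 1)
      = (if 1 ≤ n then U1⁻¹
         else 1) := by
    rw [finprod_eq_single _ 0 (fun s hs => by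
      split_ifs with h
      · rw [Om_eq_zero_of_s hs, zpow_zero]
      · rfl)]
    by_cases hn : 1 ≤ n
    · rw [dif_pos ⟨single_one_ne_zero 0, by rw [sumval]; simp; omega⟩, if_pos hn]
      have hOm : Om (Finsupp.single (0:Fin 2) 1) 0 = -1 := by
        unfold Om; rw [if_pos ⟨rfl, rfl⟩]
      rw [hOm, zpow_neg_one]
      rfl
    · rw [if_neg hn, dif_neg (by
        rintro ⟨-, hsle⟩
        rw [sumval] at hsle
        simp [Finsupp.single_apply] at hsle
        omega)]
  have hg2 : (∏ᶠ s : ℤ, if h : (Finsupp.single (1:Fin 2) 1 : Fin 2 →₀ ℕ) ≠ 0 ∧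
        ((Finsupp.single (1:Fin 2) 1 : Fin 2 →₀ ℕ).sum fun _ c => c) ≤ n then
        PochUnit (Finsupp.single (1:Fin 2) 1) h.1 s ^ Om (Finsupp.single (1:Fin 2) 1) s else 1)
      = (if 1 ≤ n then U2⁻¹
         else 1) := by
    rw [finprod_eq_single _ 0 (fun s hs => by
      split_ifs with h
      · rw [Om_eq_zero_of_s hs, zpow_zero]
      · rfl)]
    by_cases hn : 1 ≤ n
    · rw [dif_pos ⟨single_one_ne_zero 1, by rw [sumval]; simp; omega⟩, if_pos hn]
      have hOm : Om (Finsupp.single (1:Fin 2) 1) 0 = -1 := by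
        unfold Om
        rw [if_neg (fun h => e1_ne_e2 h.1.symm), if_pos ⟨rfl, rfl⟩]
      rw [hOm, zpow_neg_one]
      rfl
    · rw [if_neg hn, dif_neg (by
        rintro ⟨-, hsle⟩
        rw [sumval] at hsle
        simp [Finsupp.single_apply] at hsle
        omega)]
  have hg3 : (∏ᶠ s : ℤ, if h : (Finsupp.single (0:Fin 2) 1 + Finsupp.single (1:Fin 2) 1
          : Fin 2 →₀ ℕ) ≠ 0 ∧
        ((Finsupp.single (0:Fin 2) 1 + Finsupp.single (1:Fin 2) 1 : Fin 2 →₀ ℕ).sum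
          fun _ c => c) ≤ n then
        PochUnit (Finsupp.single (0:Fin 2) 1 + Finsupp.single (1:Fin 2) 1) h.1 s ^
          Om (Finsupp.single (0:Fin 2) 1 + Finsupp.single (1:Fin 2) 1) s else 1)
      = (if 2 ≤ n then
          PochUnit (Finsupp.single (0:Fin 2) 1 + Finsupp.single (1:Fin 2) 1) e12_ne_zero 0
         else 1) := by
    rw [finprod_eq_single _ 0 (fun s hs => by
      split_ifs with h
      · rw [Om_eq_zero_of_s hs, zpow_zero]
      · rfl)]
    by_cases hn : 2 ≤ n
    · rw [dif_pos ⟨e12_ne_zero, by rw [sumval]; simp [Finsupp.single_apply]; omega⟩, if_pos hn]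
      have hOm : Om (Finsupp.single (0:Fin 2) 1 + Finsupp.single (1:Fin 2) 1) 0 = 1 := by
        unfold Om
        rw [if_neg (fun h => e1_ne_e12 h.1.symm), if_neg (fun h => e2_ne_e12 h.1.symm),
          if_pos ⟨rfl, rfl⟩]
      rw [hOm, zpow_one]
    · rw [if_neg hn, dif_neg (by
        rintro ⟨-, hsle⟩
        rw [sumval] at hsle
        simp [Finsupp.single_apply] at hsle
        omega)]
  rw [hg1, hg2, hg3]

lemma Pser_factored :
    Pser !![(0 : ℤ), 1; 1, 0] =
      Poch (Finsupp.single (0:Fin 2) 1 + Finsupp.single (1:Fin 2) 1) 0 *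
        (((U1⁻¹ : (MvPowerSeries (Fin 2) K)ˣ) : MvPowerSeries (Fin 2) K) *
         ((U2⁻¹ : (MvPowerSeries (Fin 2) K)ˣ) : MvPowerSeries (Fin 2) K)) := by
  have hc1 : ((U1 : (MvPowerSeries (Fin 2) K)ˣ) : MvPowerSeries (Fin 2) K)
      = Poch (Finsupp.single (0:Fin 2) 1) 0 := IsUnit.unit_spec _
  have hc2 : ((U2 : (MvPowerSeries (Fin 2) K)ˣ) : MvPowerSeries (Fin 2) K)
      = Poch (Finsupp.single (1:Fin 2) 1) 0 := IsUnit.unit_spec _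
  rw [← part1, ← hc1, ← hc2]
  have h : Pser !![(0 : ℤ), 1; 1, 0] * ((U1 : (MvPowerSeries (Fin 2) K)ˣ) : MvPowerSeries (Fin 2) K) *
        ((U2 : (MvPowerSeries (Fin 2) K)ˣ) : MvPowerSeries (Fin 2) K) *
        (((U1⁻¹ : (MvPowerSeries (Fin 2) K)ˣ) : MvPowerSeries (Fin 2) K) *
         ((U2⁻¹ : (MvPowerSeries (Fin 2) K)ˣ) : MvPowerSeries (Fin 2) K))
      = Pser !![(0 : ℤ), 1; 1, 0] *
          (((U1 : (MvPowerSeries (Fin 2) K)ˣ) : MvPowerSeries (Fin 2) K) *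
            ((U1⁻¹ : (MvPowerSeries (Fin 2) K)ˣ) : MvPowerSeries (Fin 2) K)) *
          (((U2 : (MvPowerSeries (Fin 2) K)ˣ) : MvPowerSeries (Fin 2) K) *
            ((U2⁻¹ : (MvPowerSeries (Fin 2) K)ˣ) : MvPowerSeries (Fin 2) K)) := by ring
  rw [h, Units.mul_inv, Units.mul_inv, mul_one, mul_one]

lemma coeff_mul_lowdeg (w : MvPowerSeries (Fin 2) K) (d : Fin 2 →₀ ℕ) (hd : d 0 + d 1 ≤ 1) :
    MvPowerSeries.coeff d
        (Poch (Finsupp.single (0:Fin 2) 1 + Finsupp.single (1:Fin 2) 1) 0 * w) =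
      MvPowerSeries.coeff d w := by
  classical
  rw [MvPowerSeries.coeff_mul]
  rw [Finset.sum_eq_single ((0 : Fin 2 →₀ ℕ), d)]
  · rw [MvPowerSeries.coeff_apply]
    have h0 : (0 : Fin 2 →₀ ℕ) =
        (0:ℕ) • (Finsupp.single (0:Fin 2) 1 + Finsupp.single (1:Fin 2) 1) := by simp
    rw [h0, Poch_apply_smul e12_ne_zero 0 0]
    simp [qPoch]
  · rintro ⟨p1, p2⟩ hp hne
    rw [Finset.HasAntidiagonal.mem_antidiagonal] at hp
    have hz : Poch (Finsupp.single (0:Fin 2) 1 + Finsupp.single (1:Fin 2) 1) 0 p1 = 0 := by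
      apply Poch_apply_ne
      rintro ⟨j, hj⟩
      have hj0 := DFunLike.congr_fun hj 0
      have hj1 := DFunLike.congr_fun hj 1
      have hs0 := DFunLike.congr_fun hp 0
      have hs1 := DFunLike.congr_fun hp 1
      simp [Finsupp.smul_apply, Finsupp.add_apply, Finsupp.single_apply] at hj0 hj1 hs0 hs1
      have hj' : j = 0 := by omega
      apply hne
      have hp1 : p1 = 0 := by rw [hj, hj']; simp
      have hp2 : p2 = d := by
        rw [hp1] at hp
        simpa using hp
      rw [hp1, hp2]
    rw [MvPowerSeries.coeff_apply _ p1, hz, zero_mul]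
  · intro habs
    exact absurd (Finset.HasAntidiagonal.mem_antidiagonal.mpr (zero_add d)) habs

lemma isdt : IsDTExponent !![(0 : ℤ), 1; 1, 0] Om := by
  constructor
  · intro d _
    apply Set.Finite.subset (Set.finite_singleton (0 : ℤ))
    intro s hs
    simp only [Function.mem_support] at hs
    rw [Set.mem_singleton_iff]
    by_contra hs0
    exact hs (Om_eq_zero_of_s hs0)
  · intro n d hdn
    rcases Nat.lt_or_ge n 2 with hn2 | hn2
    · rcases Nat.lt_or_ge n 1 with hn1 | hn1
      · -- n = 0
        have hd0 : d = 0 := by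
          rw [sumval] at hdn
          ext x
          fin_cases x <;> simp <;> omega
        have hn0 : n = 0 := by omega
        subst hn0
        have hDT : DTProd Om 0 = 1 := by
          rw [DTProd_eval]
          norm_num
        rw [hDT, hd0, Pser_coeff_eval]
        simp [qPoch, MvPowerSeries.coeff_one]
      · -- n = 1
        have hn1' : n = 1 := by omega
        subst hn1'
        have hDT : DTProd Om 1 = U1⁻¹ * (U2⁻¹ * 1) := by
          rw [DTProd_eval]
          norm_num
        rw [hDT]
        rw [sumval] at hdn
        have hco : ((U1⁻¹ * (U2⁻¹ * 1) : (MvPowerSeries (Fin 2) K)ˣ) : MvPowerSeries (Fin 2) K)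
            = ((U1⁻¹ : (MvPowerSeries (Fin 2) K)ˣ) : MvPowerSeries (Fin 2) K) *
              ((U2⁻¹ : (MvPowerSeries (Fin 2) K)ˣ) : MvPowerSeries (Fin 2) K) := by
          rw [mul_one, Units.val_mul]
        rw [hco, Pser_factored, coeff_mul_lowdeg _ _ hdn]
    · -- n ≥ 2
      have hDT : Pser !![(0 : ℤ), 1; 1, 0] = ↑(DTProd Om n) := by
        rw [DTProd_eval, if_pos (by omega : 1 ≤ n), if_pos (by omega : 1 ≤ n),
          if_pos hn2]
        rw [Units.val_mul, Units.val_mul, Pser_factored]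
        have hc12 : ((PochUnit (Finsupp.single (0:Fin 2) 1 + Finsupp.single (1:Fin 2) 1)
            e12_ne_zero 0 : (MvPowerSeries (Fin 2) K)ˣ) : MvPowerSeries (Fin 2) K)
            = Poch (Finsupp.single (0:Fin 2) 1 + Finsupp.single (1:Fin 2) 1) 0 :=
          IsUnit.unit_spec _
        rw [← hc12]
        ring
      rw [hDT]

end DT

open Classical in
/-- **Factorization for the symmetric A₂ quiver (Sec. 5.1):**
`P_C = (x₁;q²)_∞^{−1}(x₂;q²)_∞^{−1}(x₁x₂;q²)_∞`, i.e.
`P_C · Poch((1,0),0) · Poch((0,1),0) = Poch((1,1),0)`; consequently the symmetric A₂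
quiver has exactly the three nonzero DT invariants `Ω((1,0),0) = Ω((0,1),0) = −1`,
`Ω((1,1),0) = +1`. -/
theorem statement14 :
    Pser !![(0 : ℤ), 1; 1, 0] * Poch (Finsupp.single (0 : Fin 2) 1) 0 *
        Poch (Finsupp.single (1 : Fin 2) 1) 0
      = Poch (Finsupp.single (0 : Fin 2) 1 + Finsupp.single (1 : Fin 2) 1) 0 ∧
    IsDTExponent !![(0 : ℤ), 1; 1, 0]
      (fun d s =>
        if d = Finsupp.single (0 : Fin 2) 1 ∧ s = 0 then -1
        else if d = Finsupp.single (1 : Fin 2) 1 ∧ s = 0 then -1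
        else if d = Finsupp.single (0 : Fin 2) 1 + Finsupp.single (1 : Fin 2) 1 ∧ s = 0
          then 1 else 0) := by
  exact ⟨part1, isdt⟩
end
end

section
/- (Quantum A-polynomial equation for the (−m)-loop quiver.) Fix m ∈ ℕ. In K[[x]] with K = ℚ(q), let A = Σ_{d≥0} (−q)^{−m d²} q^{(m+1)d} x^d/(q²;q²)_d and B = Σ_{d≥0} (−q)^{−m d²} q^{(m+3)d} x^d/(q²;q²)_d (so A = P_{−m}(q^{m+1}x) and B = P_{−m}(q^{m+3}x)). A has constant term 1, hence is a unit; set Y = B·A^{−1}. For c ∈ K let Y(cx) denote the rescaled series whose coefficient of x^n is c^n times that of Y. Then ∏_{i=1}^{m} Y(q^{−2i}x) · (1 − Y) + (−1)^{m+1} q x = 0; equivalently Y satisfies the extremal quantum A-polynomial equation 1 − Y(x) + (−1)^{m+1} q x ∏_{i=1}^{m} Y(q^{−2i}x)^{−1} = 0. -/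
noncomputable section

lemma qq_ne_zero : qq ≠ 0 := RatFunc.X_ne_zero

lemma qq_pow_ne_one_s16 (n : ℕ) : qq ^ (n + 1) ≠ 1 := by
  intro h
  have : (algebraMap (Polynomial ℚ) K) (Polynomial.X ^ (n + 1)) =
      (algebraMap (Polynomial ℚ) K) 1 := by
    simpa [map_pow, RatFunc.algebraMap_X, qq] using h
  have := RatFunc.algebraMap_injective ℚ this
  have hdeg := congrArg Polynomial.natDegree this
  simp [Polynomial.natDegree_X_pow] at hdeg

lemma one_sub_ne (k : ℕ) : (1 : K) - qq ^ 2 * qq ^ (2 * k) ≠ 0 := by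
  intro h
  apply qq_pow_ne_one_s16 (2 * k + 1)
  linear_combination -h

lemma qPoch_ne_zero (d : ℕ) : qPoch (qq ^ 2) d ≠ 0 := by
  rw [qPoch]
  exact Finset.prod_ne_zero_iff.mpr fun k _ => one_sub_ne k

lemma neg_one_zpow_neg_nat (n : ℕ) : ((-1 : K)) ^ (-(n : ℤ)) = (-1 : K) ^ n := by
  rw [zpow_neg, zpow_natCast, ← inv_pow, inv_neg, inv_one]

lemma qq_zpow_pow (a : ℤ) (n : ℕ) : (qq ^ a) ^ n = qq ^ (a * n) := by
  rw [← zpow_natCast (qq ^ a) n, ← zpow_mul]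

/-- The base series for the `(-m)`-loop quiver. -/
def Pm (m : ℕ) : PowerSeries K :=
  PowerSeries.mk fun d : ℕ => (-qq) ^ (-(m : ℤ) * (d : ℤ) ^ 2) / qPoch (qq ^ 2) d

/-- `Pm` rescaled by `q^k`. -/
def Rk (m : ℕ) (k : ℤ) : PowerSeries K := PowerSeries.rescale (qq ^ k) (Pm m)

lemma coeff_Rk (m : ℕ) (k : ℤ) (d : ℕ) :
    PowerSeries.coeff d (Rk m k) =
      (qq ^ k) ^ d * ((-qq) ^ (-(m : ℤ) * (d : ℤ) ^ 2) / qPoch (qq ^ 2) d) := by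
  rw [Rk, PowerSeries.coeff_rescale, Pm, PowerSeries.coeff_mk]

lemma rescale_Rk (m : ℕ) (j k : ℤ) :
    PowerSeries.rescale (qq ^ j) (Rk m k) = Rk m (k + j) := by
  rw [Rk, PowerSeries.rescale_rescale, ← zpow_add₀ qq_ne_zero, Rk]

lemma constantCoeff_Rk (m : ℕ) (k : ℤ) : PowerSeries.constantCoeff (Rk m k) = 1 := by
  have := coeff_Rk m k 0
  rw [PowerSeries.coeff_zero_eq_constantCoeff] at this
  simp [qPoch, this]

lemma isUnit_Rk (m : ℕ) (k : ℤ) : IsUnit (Rk m k) := by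
  rw [PowerSeries.isUnit_iff_constantCoeff, constantCoeff_Rk]
  exact isUnit_one

/-- The key exponent identity. -/
lemma expo_arith (m e : ℕ) :
    (qq ^ ((m : ℤ) + 1)) ^ (e + 1) * (-qq) ^ (-(m : ℤ) * ((e : ℤ) + 1) ^ 2) =
      (-1 : K) ^ m * qq * ((qq ^ (1 - (m : ℤ))) ^ e *
        (-qq) ^ (-(m : ℤ) * (e : ℤ) ^ 2)) := by
  have hneg : (-qq) = (-1 : K) * qq := by ring
  have h1 : (-(m : ℤ)) * ((e : ℤ) + 1) ^ 2 = -((m * (e + 1) ^ 2 : ℕ) : ℤ) := by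
    push_cast; ring
  have h0 : (-(m : ℤ)) * (e : ℤ) ^ 2 = -((m * e ^ 2 : ℕ) : ℤ) := by push_cast; ring
  rw [h1, h0, hneg, mul_zpow, mul_zpow, neg_one_zpow_neg_nat, neg_one_zpow_neg_nat]
  have hsign : ((-1 : K)) ^ (m * (e + 1) ^ 2) = (-1 : K) ^ m * (-1 : K) ^ (m * e ^ 2) := by
    have hsplit : m * (e + 1) ^ 2 = m * e ^ 2 + m + 2 * (m * e) := by ring
    have h2 : ((-1 : K)) ^ (2 * (m * e)) = 1 := by
      rw [pow_mul]; norm_num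
    rw [hsplit, pow_add, pow_add, h2, mul_one]
    ring
  rw [qq_zpow_pow, qq_zpow_pow, hsign]
  have hexp : qq ^ (((m : ℤ) + 1) * ((e + 1 : ℕ) : ℤ)) * qq ^ (-((m * (e + 1) ^ 2 : ℕ) : ℤ)) =
      qq * (qq ^ ((1 - (m : ℤ)) * (e : ℕ)) * qq ^ (-((m * e ^ 2 : ℕ) : ℤ))) := by
    rw [← zpow_add₀ qq_ne_zero, ← zpow_add₀ qq_ne_zero, ← zpow_one_add₀ qq_ne_zero]
    congr 1
    push_cast; ring
  calc qq ^ (((m : ℤ) + 1) * ((e + 1 : ℕ) : ℤ)) *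
        ((-1 : K) ^ m * (-1 : K) ^ (m * e ^ 2) * qq ^ (-((m * (e + 1) ^ 2 : ℕ) : ℤ)))
      = ((-1 : K) ^ m * (-1 : K) ^ (m * e ^ 2)) *
        (qq ^ (((m : ℤ) + 1) * ((e + 1 : ℕ) : ℤ)) * qq ^ (-((m * (e + 1) ^ 2 : ℕ) : ℤ))) := by
        ring
    _ = ((-1 : K) ^ m * (-1 : K) ^ (m * e ^ 2)) *
        (qq * (qq ^ ((1 - (m : ℤ)) * (e : ℕ)) * qq ^ (-((m * e ^ 2 : ℕ) : ℤ)))) := by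
        rw [hexp]
    _ = _ := by ring

/-- The key recursion. -/
lemma key_recursion (m : ℕ) :
    Rk m ((m : ℤ) + 1) - Rk m ((m : ℤ) + 3) =
      PowerSeries.C ((-1) ^ m * qq) * (PowerSeries.X * Rk m (1 - (m : ℤ))) := by
  ext d
  rw [map_sub, coeff_Rk, coeff_Rk, PowerSeries.coeff_C_mul]
  cases d with
  | zero =>
    simp [qPoch]
  | succ e =>
    rw [PowerSeries.coeff_succ_X_mul, coeff_Rk]
    have hpoch : qPoch (qq ^ 2) (e + 1) = qPoch (qq ^ 2) e * (1 - qq ^ 2 * qq ^ (2 * e)) := by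
      rw [qPoch, qPoch, Finset.prod_range_succ]
    have ht : (1 : K) - qq ^ 2 * qq ^ (2 * e) ≠ 0 := one_sub_ne e
    have hN := qPoch_ne_zero e
    have hNt : qPoch (qq ^ 2) e * ((1 : K) - qq ^ 2 * qq ^ (2 * e)) ≠ 0 := mul_ne_zero hN ht
    have h3 : (qq ^ ((m : ℤ) + 3)) ^ (e + 1) =
        (qq ^ ((m : ℤ) + 1)) ^ (e + 1) * (qq ^ 2 * qq ^ (2 * e)) := by
      rw [qq_zpow_pow, qq_zpow_pow,
        show qq ^ 2 * qq ^ (2 * e) = qq ^ (2 * e + 2) by ring,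
        ← zpow_natCast qq (2 * e + 2), ← zpow_add₀ qq_ne_zero]
      congr 1
      push_cast; ring
    have harith := expo_arith m e
    rw [hpoch, h3]
    rw [show ((e + 1 : ℕ) : ℤ) = (e : ℤ) + 1 by push_cast; ring]
    rw [div_eq_mul_inv, div_eq_mul_inv]
    have hNi : qPoch (qq ^ 2) e * (qPoch (qq ^ 2) e)⁻¹ = 1 := mul_inv_cancel₀ hN
    have hNti : (qPoch (qq ^ 2) e * ((1 : K) - qq ^ 2 * qq ^ (2 * e))) *
        (qPoch (qq ^ 2) e * ((1 : K) - qq ^ 2 * qq ^ (2 * e)))⁻¹ = 1 := mul_inv_cancel₀ hNt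
    linear_combination
      ((1 : K) - qq ^ 2 * qq ^ (2 * e)) *
        (qPoch (qq ^ 2) e * ((1 : K) - qq ^ 2 * qq ^ (2 * e)))⁻¹ * harith
      + (-1 : K) ^ m * qq * ((qq ^ (1 - (m : ℤ))) ^ e * (-qq) ^ (-(m : ℤ) * (e : ℤ) ^ 2)) *
        (qPoch (qq ^ 2) e)⁻¹ * hNti
      - (-1 : K) ^ m * qq * ((qq ^ (1 - (m : ℤ))) ^ e * (-qq) ^ (-(m : ℤ) * (e : ℤ) ^ 2)) *
        (((1 : K) - qq ^ 2 * qq ^ (2 * e)) *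
          (qPoch (qq ^ 2) e * ((1 : K) - qq ^ 2 * qq ^ (2 * e)))⁻¹) * hNi

lemma tele {G : Type*} [CommGroup G] (g : ℕ → G) (m : ℕ) :
    ∏ i ∈ Finset.Icc 1 m, g (i - 1) * (g i)⁻¹ = g 0 * (g m)⁻¹ := by
  induction m with
  | zero => simp
  | succ n ih =>
    rw [Finset.prod_Icc_succ_top (by omega), ih]
    simp [mul_assoc]

/-- **The extremal quantum A-polynomial equation for the `(−m)`-loop quiver
(Eq. (A.3)):** with `A = P_{−m}(q^{m+1}x)`, `B = P_{−m}(q^{m+3}x)` (both in `K[[x]]`,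
`A` with constant term `1`, hence a unit) and `Y = B·A⁻¹`, one has
`∏_{i=1}^{m} Y(q^{−2i}x) · (1 − Y) + (−1)^{m+1} q x = 0`. -/
theorem statement16 (m : ℕ) :
    letI A : PowerSeries K := PowerSeries.mk fun d : ℕ =>
      (-qq) ^ (-(m : ℤ) * (d : ℤ) ^ 2) * qq ^ ((m + 1) * d) / qPoch (qq ^ 2) d
    letI B : PowerSeries K := PowerSeries.mk fun d : ℕ =>
      (-qq) ^ (-(m : ℤ) * (d : ℤ) ^ 2) * qq ^ ((m + 3) * d) / qPoch (qq ^ 2) d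
    letI Y : PowerSeries K := B * A⁻¹
    PowerSeries.constantCoeff A = 1 ∧
    (∏ i ∈ Finset.Icc 1 m, PowerSeries.rescale (qq ^ (-2 * (i : ℤ))) Y) * (1 - Y) +
        PowerSeries.C ((-1) ^ (m + 1) * qq) * PowerSeries.X = 0 := by
  have hA : (PowerSeries.mk fun d : ℕ =>
      (-qq) ^ (-(m : ℤ) * (d : ℤ) ^ 2) * qq ^ ((m + 1) * d) / qPoch (qq ^ 2) d) =
      Rk m ((m : ℤ) + 1) := by
    ext d
    rw [PowerSeries.coeff_mk, coeff_Rk,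
      show ((m : ℤ) + 1) = ((m + 1 : ℕ) : ℤ) by push_cast; ring, zpow_natCast, ← pow_mul]
    ring
  have hB : (PowerSeries.mk fun d : ℕ =>
      (-qq) ^ (-(m : ℤ) * (d : ℤ) ^ 2) * qq ^ ((m + 3) * d) / qPoch (qq ^ 2) d) =
      Rk m ((m : ℤ) + 3) := by
    ext d
    rw [PowerSeries.coeff_mk, coeff_Rk,
      show ((m : ℤ) + 3) = ((m + 3 : ℕ) : ℤ) by push_cast; ring, zpow_natCast, ← pow_mul]
    ring
  rw [hA, hB]
  refine ⟨constantCoeff_Rk m _, ?_⟩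
  -- units
  set u : ℤ → (PowerSeries K)ˣ := fun k => (isUnit_Rk m k).unit with hu
  have hval : ∀ k, (u k : PowerSeries K) = Rk m k := fun k => (isUnit_Rk m k).unit_spec
  have hAinv : (Rk m ((m : ℤ) + 1))⁻¹ = ((u ((m : ℤ) + 1))⁻¹ : (PowerSeries K)ˣ) := by
    have h : PowerSeries.constantCoeff (Rk m ((m : ℤ) + 1)) ≠ 0 := by
      rw [constantCoeff_Rk]; exact one_ne_zero
    rw [eq_comm, PowerSeries.eq_inv_iff_mul_eq_one h, ← hval]
    exact (u ((m : ℤ) + 1)).inv_mul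
  have hY : Rk m ((m : ℤ) + 3) * (Rk m ((m : ℤ) + 1))⁻¹ =
      ((u ((m : ℤ) + 3) * (u ((m : ℤ) + 1))⁻¹ : (PowerSeries K)ˣ) : PowerSeries K) := by
    rw [hAinv, Units.val_mul, hval]
  have hres : ∀ (j k : ℤ), PowerSeries.rescale (qq ^ j) ((u k : PowerSeries K)) =
      (u (k + j) : PowerSeries K) := by
    intro j k; rw [hval, hval, rescale_Rk]
  have hresInv : ∀ (j k : ℤ),
      PowerSeries.rescale (qq ^ j) (((u k)⁻¹ : (PowerSeries K)ˣ) : PowerSeries K) =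
      (((u (k + j))⁻¹ : (PowerSeries K)ˣ) : PowerSeries K) := by
    intro j k
    have hmul : PowerSeries.rescale (qq ^ j) (((u k)⁻¹ : (PowerSeries K)ˣ) : PowerSeries K) *
        (u (k + j) : PowerSeries K) = 1 := by
      rw [← hres j k, ← map_mul]
      rw [show (((u k)⁻¹ : (PowerSeries K)ˣ) : PowerSeries K) * (u k : PowerSeries K) = 1 from
        (u k).inv_mul, map_one]
    calc PowerSeries.rescale (qq ^ j) (((u k)⁻¹ : (PowerSeries K)ˣ) : PowerSeries K)
        = PowerSeries.rescale (qq ^ j) (((u k)⁻¹ : (PowerSeries K)ˣ) : PowerSeries K) *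
          ((u (k + j) : PowerSeries K) *
            (((u (k + j))⁻¹ : (PowerSeries K)ˣ) : PowerSeries K)) := by
          rw [(u (k + j)).mul_inv, mul_one]
      _ = _ := by rw [← mul_assoc, hmul, one_mul]
  -- the product telescopes
  have hprod : (∏ i ∈ Finset.Icc 1 m, PowerSeries.rescale (qq ^ (-2 * (i : ℤ)))
        (Rk m ((m : ℤ) + 3) * (Rk m ((m : ℤ) + 1))⁻¹)) =
      ((u ((m : ℤ) + 1) * (u (1 - (m : ℤ)))⁻¹ : (PowerSeries K)ˣ) : PowerSeries K) := by
    have hstep : ∀ i ∈ Finset.Icc 1 m, PowerSeries.rescale (qq ^ (-2 * (i : ℤ)))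
        (Rk m ((m : ℤ) + 3) * (Rk m ((m : ℤ) + 1))⁻¹) =
        ((u ((m : ℤ) + 1 - 2 * (((i - 1 : ℕ)) : ℤ)) * (u ((m : ℤ) + 1 - 2 * (i : ℤ)))⁻¹ :
          (PowerSeries K)ˣ) : PowerSeries K) := by
      intro i hi
      have h1 : 1 ≤ i := (Finset.mem_Icc.mp hi).1
      have hic : ((i - 1 : ℕ) : ℤ) = (i : ℤ) - 1 := by omega
      rw [hY, Units.val_mul, map_mul, hres, hresInv, Units.val_mul, hic]
      congr 3; ring
    rw [Finset.prod_congr rfl hstep]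
    have hcoeprod : ∀ f : ℕ → (PowerSeries K)ˣ,
        (∏ i ∈ Finset.Icc 1 m, ((f i : PowerSeries K))) =
        ((∏ i ∈ Finset.Icc 1 m, f i : (PowerSeries K)ˣ) : PowerSeries K) :=
      fun f => (map_prod (Units.coeHom (PowerSeries K)) f _).symm
    rw [hcoeprod (fun i => u ((m : ℤ) + 1 - 2 * (((i - 1 : ℕ)) : ℤ)) *
      (u ((m : ℤ) + 1 - 2 * (i : ℤ)))⁻¹)]
    congr 1
    rw [tele (fun n : ℕ => u ((m : ℤ) + 1 - 2 * (n : ℤ))) m]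
    rw [show (m : ℤ) + 1 - 2 * ((0 : ℕ) : ℤ) = (m : ℤ) + 1 by push_cast; ring,
      show (m : ℤ) + 1 - 2 * (m : ℤ) = 1 - (m : ℤ) by ring]
  -- finish
  have h1 : Rk m ((m : ℤ) + 1) * (((u ((m : ℤ) + 1))⁻¹ : (PowerSeries K)ˣ) : PowerSeries K)
      = 1 := by rw [← hval ((m : ℤ) + 1)]; exact (u ((m : ℤ) + 1)).mul_inv
  have h2 : Rk m (1 - (m : ℤ)) * (((u (1 - (m : ℤ)))⁻¹ : (PowerSeries K)ˣ) : PowerSeries K)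
      = 1 := by rw [← hval (1 - (m : ℤ))]; exact (u (1 - (m : ℤ))).mul_inv
  have hk := key_recursion m
  have hC : PowerSeries.C ((-1) ^ (m + 1) * qq) = - PowerSeries.C ((-1) ^ m * qq) := by
    rw [← map_neg]
    congr 1
    rw [pow_succ]
    ring
  rw [hprod, hAinv, hC, Units.val_mul, hval]
  linear_combination (exp := 1)
    ((((u (1 - (m : ℤ)))⁻¹ : (PowerSeries K)ˣ) : PowerSeries K)) * hk +
    (- ((((u (1 - (m : ℤ)))⁻¹ : (PowerSeries K)ˣ) : PowerSeries K) * Rk m ((m : ℤ) + 3))) * h1 +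
    (PowerSeries.C ((-1) ^ m * qq) * PowerSeries.X) * h2
end
end
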